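/- Given constants γ > 1 and r_max > 0, an initial radius r_0 ∈ (0, r_max], and a set S ⊆ ℕ of 'successful' iteration indices, define the trust-region radius sequence (r_k)_{k∈ℕ} by r_{k+1} = min(r_max, γ·r_k) if k ∈ S and r_{k+1} = r_k/γ if k ∉ S. If 0 < r̄ < r_0, then for every ℓ ∈ ℕ the number of indices k ∈ {0,…,ℓ} with r_k ≤ r̄ and k ∈ S is at most (ℓ+1)/2. -/
import Mathlib


open scoped Classical

/-- The deterministic counting inequality (3.19): among the first `ℓ+1` iterations of a
trust-region radius update, at most `(ℓ+1)/2` can be successful iterations with radius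
at most `r̄ < r₀`. -/
theorem count_small_successful_le_half
    (γ rmax r0 rbar : ℝ)
    (hγ : 1 < γ) (hrmax : 0 < rmax) (hr0 : 0 < r0) (hr0max : r0 ≤ rmax)
    (S : ℕ → Prop) (r : ℕ → ℝ)
    (hinit : r 0 = r0)
    (hrec : ∀ k, r (k + 1) = if S k then min rmax (γ * r k) else r k / γ)
    (hrbar : 0 < rbar) (hrbarlt : rbar < r0) :
    ∀ ℓ : ℕ,
      (((Finset.range (ℓ + 1)).filter (fun k => r k ≤ rbar ∧ S k)).card : ℝ)
        ≤ (ℓ + 1) / 2 := by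
  intro ℓ
  have hγ0 : (0:ℝ) < γ := lt_trans one_pos hγ
  set P : ℕ → Prop := fun k => r k ≤ rbar ∧ S k with hP
  set N : ℕ → ℕ := fun k => ((Finset.range k).filter P).card with hNdef
  set M : ℕ → ℕ := fun k => ((Finset.range k).filter (fun j => ¬ S j)).card with hMdef
  have hNsucc : ∀ k, N (k+1) = if P k then N k + 1 else N k := by
    intro k
    simp only [hNdef, Finset.range_add_one, Finset.filter_insert]
    split
    · rw [Finset.card_insert_of_notMem]
      simp
    · rfl
  have hMsucc : ∀ k, M (k+1) = if S k then M k else M k + 1 := by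
    intro k
    simp only [hMdef, Finset.range_add_one, Finset.filter_insert]
    by_cases h : S k
    · simp [h]
    · simp only [h, not_false_iff, if_true, if_false]
      rw [Finset.card_insert_of_notMem]
      simp
  have key : ∀ k, r k ≤ rmax ∧ rbar * γ ^ ((N k : ℤ) - (M k : ℤ)) < r k ∧ N k ≤ M k := by
    intro k
    induction k with
    | zero =>
      have : N 0 = 0 := by simp [hNdef]
      have h2 : M 0 = 0 := by simp [hMdef]
      rw [this, h2, hinit]
      norm_num
      exact ⟨hr0max, hrbarlt⟩
    | succ k ih =>
      obtain ⟨hle, hlt, hNM⟩ := ih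
      have hbpos : (0:ℝ) < rbar * γ ^ ((N k : ℤ) - (M k : ℤ)) := by positivity
      have hrk : 0 < r k := lt_trans hbpos hlt
      rw [hNsucc k, hMsucc k, hrec k]
      by_cases hS : S k
      · by_cases hsm : r k ≤ rbar
        · -- small successful
          have hPk : P k := ⟨hsm, hS⟩
          have hlt1 : γ ^ ((N k : ℤ) - (M k : ℤ)) < 1 := by
            have : rbar * γ ^ ((N k : ℤ) - (M k : ℤ)) < rbar * 1 := by
              calc rbar * γ ^ ((N k : ℤ) - (M k : ℤ)) < r k := hlt
                _ ≤ rbar := hsm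
                _ = rbar * 1 := by ring
            exact lt_of_mul_lt_mul_left this hrbar.le
          have hexp : (N k : ℤ) - (M k : ℤ) < 0 := by
            by_contra h
            push_neg at h
            have := one_le_zpow₀ hγ.le h
            linarith
          have hNltM : N k < M k := by
            have : (N k : ℤ) < M k := by linarith
            exact_mod_cast this
          simp only [if_pos hPk, if_pos hS]
          have hcast : ((N k + 1 : ℕ) : ℤ) - (M k : ℤ) = ((N k : ℤ) - (M k : ℤ)) + 1 := by
            push_cast; ring
          have hzpow : γ ^ (((N k : ℤ) - (M k : ℤ)) + 1) = γ ^ ((N k : ℤ) - (M k : ℤ)) * γ :=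
            zpow_add_one₀ hγ0.ne' _
          refine ⟨min_le_left _ _, ?_, hNltM⟩
          rw [hcast, hzpow]
          have hexp1 : (N k : ℤ) - (M k : ℤ) + 1 ≤ 0 := by linarith
          have hle1 : γ ^ (((N k : ℤ) - (M k : ℤ)) + 1) ≤ 1 := zpow_le_one_of_nonpos₀ hγ.le hexp1
          rw [hzpow] at hle1
          refine lt_min ?_ ?_
          · nlinarith
          · nlinarith
        · -- large successful
          have hPk : ¬ P k := fun h => hsm h.1
          simp only [if_neg hPk, if_pos hS]
          refine ⟨min_le_left _ _, ?_, hNM⟩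
          refine lt_min (lt_of_lt_of_le hlt hle) ?_
          nlinarith
      · -- unsuccessful
        have hPk : ¬ P k := fun h => hS h.2
        simp only [if_neg hPk, if_neg hS]
        refine ⟨?_, ?_, le_trans hNM (Nat.le_succ _)⟩
        · calc r k / γ ≤ r k := by
                rw [div_le_iff₀ hγ0]; nlinarith
            _ ≤ rmax := hle
        · have hcast : ((N k : ℤ)) - ((M k + 1 : ℕ) : ℤ) = ((N k : ℤ) - (M k : ℤ)) - 1 := by
            push_cast; ring
          rw [hcast, zpow_sub_one₀ hγ0.ne']
          have heq : rbar * (γ ^ ((N k : ℤ) - (M k : ℤ)) * γ⁻¹)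
              = (rbar * γ ^ ((N k : ℤ) - (M k : ℤ))) / γ := by
            field_simp
          rw [heq]
          gcongr
  -- conclude
  obtain ⟨-, -, hNM⟩ := key (ℓ + 1)
  have hdisj : Disjoint ((Finset.range (ℓ+1)).filter P)
      ((Finset.range (ℓ+1)).filter (fun j => ¬ S j)) := by
    refine Finset.disjoint_left.mpr ?_
    intro x hx hx2
    simp only [Finset.mem_filter] at hx hx2
    exact hx2.2 hx.2.2
  have hsum : N (ℓ+1) + M (ℓ+1) ≤ ℓ + 1 := by
    have := Finset.card_union_of_disjoint hdisj
    calc N (ℓ+1) + M (ℓ+1)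
        = (((Finset.range (ℓ+1)).filter P) ∪
           ((Finset.range (ℓ+1)).filter (fun j => ¬ S j))).card := this.symm
      _ ≤ (Finset.range (ℓ+1)).card := Finset.card_le_card (Finset.union_subset
            (Finset.filter_subset _ _) (Finset.filter_subset _ _))
      _ = ℓ + 1 := Finset.card_range _
  have h2N : 2 * N (ℓ+1) ≤ ℓ + 1 := by omega
  have : ((N (ℓ+1) : ℝ)) ≤ (ℓ + 1) / 2 := by
    have := (Nat.cast_le (α := ℝ)).mpr h2N
    push_cast at this ⊢
    linarith
  simpa [hNdef, hP] using this
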